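/- Weyl's inequality: if A1, A2, A3 are n×n Hermitian matrices with A3 = A1 + A2, and the eigenvalues of each are listed in decreasing order α^{(m)}_1 ≥ ⋯ ≥ α^{(m)}_n for m ∈ {1,2,3}, then for all i, j with i + j − 1 ≤ n we have α^{(3)}_{i+j−1} ≤ α^{(1)}_i + α^{(2)}_j. -/

import Mathlib

open Matrix Module Submodule

variable {n : ℕ}

/-- The eigenvalues of a Hermitian matrix, listed in decreasing order (with multiplicity). -/
noncomputable def eigDesc {𝕜 : Type*} [RCLike 𝕜] {n : ℕ} {A : Matrix (Fin n) (Fin n) 𝕜}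
    (hA : A.IsHermitian) : Fin n → ℝ :=
  fun i => hA.eigenvalues (Tuple.sort hA.eigenvalues i.rev)

section helpers

variable {A : Matrix (Fin n) (Fin n) ℂ} (hA : A.IsHermitian)

-- T (b j) = ev j • b j as EuclideanSpace elements
lemma toEuclideanLin_eigenvectorBasis (j : Fin n) :
    Matrix.toEuclideanLin A (hA.eigenvectorBasis j) =
      (hA.eigenvalues j : ℂ) • hA.eigenvectorBasis j := by
  apply (WithLp.equiv 2 _).injective
  ext k
  have := congrFun (hA.mulVec_eigenvectorBasis j) k
  simpa [Matrix.toEuclideanLin_apply, Complex.real_smul] using this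

lemma repr_toEuclideanLin (x : EuclideanSpace ℂ (Fin n)) (k : Fin n) :
    hA.eigenvectorBasis.repr (Matrix.toEuclideanLin A x) k
      = (hA.eigenvalues k : ℂ) * hA.eigenvectorBasis.repr x k := by
  set b := hA.eigenvectorBasis
  conv_lhs => rw [← b.sum_repr x]
  rw [map_sum, map_sum]
  simp only [_root_.map_smul, toEuclideanLin_eigenvectorBasis hA]
  simp only [show ∀ j, b.repr (toEuclideanLin A (b j)) = b.repr ((hA.eigenvalues j : ℂ) • b j)
    from fun j => congrArg b.repr (toEuclideanLin_eigenvectorBasis hA j)]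
  simp only [_root_.map_smul, b.repr_self]
  rw [show ((∑ x_1, b.repr x x_1 • (hA.eigenvalues x_1 : ℂ) • EuclideanSpace.single x_1 (1:ℂ)) k)
      = ∑ x_1, (b.repr x x_1 • (hA.eigenvalues x_1 : ℂ) • EuclideanSpace.single x_1 (1:ℂ)) k
    by rw [WithLp.ofLp_sum, Finset.sum_apply]]
  simp only [PiLp.smul_apply, EuclideanSpace.single_apply, smul_eq_mul, mul_ite, mul_one, mul_zero,
    Finset.sum_ite_eq, Finset.mem_univ, if_true]
  ring

lemma re_inner_toEuclideanLin (x : EuclideanSpace ℂ (Fin n)) :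
    RCLike.re (inner ℂ x (Matrix.toEuclideanLin A x) : ℂ)
      = ∑ k, hA.eigenvalues k * ‖hA.eigenvectorBasis.repr x k‖ ^ 2 := by
  set b := hA.eigenvectorBasis
  rw [← b.repr.inner_map_map x (Matrix.toEuclideanLin A x)]
  rw [PiLp.inner_apply]
  rw [map_sum]
  congr 1; ext k
  rw [repr_toEuclideanLin hA x k]
  simp only [RCLike.inner_apply]
  rw [mul_assoc, RCLike.mul_conj]
  norm_num [← Complex.ofReal_pow, ← Complex.ofReal_mul]
  exact Or.inl rfl

end helpers

section more

variable {A : Matrix (Fin n) (Fin n) ℂ} (hA : A.IsHermitian)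

lemma re_inner_self' (x : EuclideanSpace ℂ (Fin n)) :
    RCLike.re (inner ℂ x x : ℂ) = ∑ k, ‖hA.eigenvectorBasis.repr x k‖ ^ 2 := by
  set b := hA.eigenvectorBasis
  rw [← b.repr.inner_map_map x x, PiLp.inner_apply, map_sum]
  congr 1; ext k
  simp only [RCLike.inner_apply, RCLike.mul_conj]
  norm_cast

lemma repr_eq_zero_of_mem_span {s : Finset (Fin n)} {x : EuclideanSpace ℂ (Fin n)}
    (hx : x ∈ Submodule.span ℂ (hA.eigenvectorBasis '' ↑s)) {k : Fin n} (hk : k ∉ s) :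
    hA.eigenvectorBasis.repr x k = 0 := by
  set b := hA.eigenvectorBasis
  induction hx using Submodule.span_induction with
  | mem y hy =>
    obtain ⟨m, hm, rfl⟩ := hy
    simp only [b.repr_self, EuclideanSpace.single_apply]
    exact if_neg (by rintro rfl; exact hk hm)
  | zero => simp
  | add y z _ _ hy hz => simp [map_add, hy, hz]
  | smul c y _ hy => simp [hy]

lemma finrank_span_basis_image (s : Finset (Fin n)) :
    finrank ℂ (Submodule.span ℂ (hA.eigenvectorBasis '' ↑s)) = s.card := by
  classical
  set b := hA.eigenvectorBasis
  have hli : LinearIndependent ℂ ((↑) : (b '' ↑s) → EuclideanSpace ℂ (Fin n)) :=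
    LinearIndepOn.id_image ((b.orthonormal.linearIndependent.comp ((↑) : (↑s : Set (Fin n)) → Fin n)
      Subtype.coe_injective))
  rw [finrank_span_set_eq_card hli]
  rw [Set.toFinset_image]
  rw [Finset.card_image_of_injective _ b.orthonormal.linearIndependent.injective]
  simp

lemma rayleigh_le {s : Finset (Fin n)} {c : ℝ} (hc : ∀ k ∈ s, hA.eigenvalues k ≤ c)
    {x : EuclideanSpace ℂ (Fin n)} (hx : x ∈ Submodule.span ℂ (hA.eigenvectorBasis '' ↑s)) :
    RCLike.re (inner ℂ x (Matrix.toEuclideanLin A x) : ℂ) ≤ c * RCLike.re (inner ℂ x x : ℂ) := by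
  rw [re_inner_toEuclideanLin hA, re_inner_self' hA, Finset.mul_sum]
  apply Finset.sum_le_sum
  intro k _
  by_cases hk : k ∈ s
  · exact mul_le_mul_of_nonneg_right (hc k hk) (by positivity)
  · rw [repr_eq_zero_of_mem_span hA hx hk]; simp

lemma rayleigh_ge {s : Finset (Fin n)} {c : ℝ} (hc : ∀ k ∈ s, c ≤ hA.eigenvalues k)
    {x : EuclideanSpace ℂ (Fin n)} (hx : x ∈ Submodule.span ℂ (hA.eigenvectorBasis '' ↑s)) :
    c * RCLike.re (inner ℂ x x : ℂ) ≤ RCLike.re (inner ℂ x (Matrix.toEuclideanLin A x) : ℂ) := by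
  rw [re_inner_toEuclideanLin hA, re_inner_self' hA, Finset.mul_sum]
  apply Finset.sum_le_sum
  intro k _
  by_cases hk : k ∈ s
  · exact mul_le_mul_of_nonneg_right (hc k hk) (by positivity)
  · rw [repr_eq_zero_of_mem_span hA hx hk]; simp

lemma exists_low (c : Fin n) :
    ∃ V : Submodule ℂ (EuclideanSpace ℂ (Fin n)), finrank ℂ V = n - c ∧
      ∀ x ∈ V, RCLike.re (inner ℂ x (Matrix.toEuclideanLin A x) : ℂ)
        ≤ eigDesc hA c * RCLike.re (inner ℂ x x : ℂ) := by
  classical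
  set σ := Tuple.sort hA.eigenvalues
  refine ⟨Submodule.span ℂ (hA.eigenvectorBasis '' ↑(Finset.image σ (Finset.Iic c.rev))),
    ?_, fun x hx => ?_⟩
  · rw [finrank_span_basis_image, Finset.card_image_of_injective _ σ.injective, Fin.card_Iic]
    have := c.is_lt
    simp [Fin.val_rev]; omega
  · refine rayleigh_le hA (fun k hk => ?_) hx
    obtain ⟨m, hm, rfl⟩ := Finset.mem_image.mp hk
    exact Tuple.monotone_sort hA.eigenvalues (Finset.mem_Iic.mp hm)

lemma exists_high (c : Fin n) :
    ∃ V : Submodule ℂ (EuclideanSpace ℂ (Fin n)), finrank ℂ V = c + 1 ∧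
      ∀ x ∈ V, eigDesc hA c * RCLike.re (inner ℂ x x : ℂ)
        ≤ RCLike.re (inner ℂ x (Matrix.toEuclideanLin A x) : ℂ) := by
  classical
  set σ := Tuple.sort hA.eigenvalues
  refine ⟨Submodule.span ℂ (hA.eigenvectorBasis '' ↑(Finset.image σ (Finset.Ici c.rev))),
    ?_, fun x hx => ?_⟩
  · rw [finrank_span_basis_image, Finset.card_image_of_injective _ σ.injective, Fin.card_Ici]
    have := c.is_lt
    simp [Fin.val_rev]; omega
  · refine rayleigh_ge hA (fun k hk => ?_) hx
    obtain ⟨m, hm, rfl⟩ := Finset.mem_image.mp hk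
    exact Tuple.monotone_sort hA.eigenvalues (Finset.mem_Ici.mp hm)

end more

/-- **Weyl's inequality** (0-indexed): if `A3 = A1 + A2` are Hermitian matrices with
eigenvalues listed in decreasing order, then `α³_{i+j} ≤ α¹_i + α²_j` whenever `i + j < n`
(which is the 1-indexed statement `α³_{i+j-1} ≤ α¹_i + α²_j` for `i + j - 1 ≤ n`). -/
theorem weyl_inequality {n : ℕ} (A1 A2 A3 : Matrix (Fin n) (Fin n) ℂ)
    (h1 : A1.IsHermitian) (h2 : A2.IsHermitian) (h3 : A3.IsHermitian)
    (hsum : A3 = A1 + A2) (i j : Fin n) (hij : (i : ℕ) + (j : ℕ) < n) :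
    eigDesc h3 ⟨(i : ℕ) + (j : ℕ), hij⟩ ≤ eigDesc h1 i + eigDesc h2 j := by
  obtain ⟨V1, hV1, hr1⟩ := exists_low h1 i
  obtain ⟨V2, hV2, hr2⟩ := exists_low h2 j
  obtain ⟨V3, hV3, hr3⟩ := exists_high h3 ⟨(i : ℕ) + (j : ℕ), hij⟩
  have hn : finrank ℂ (EuclideanSpace ℂ (Fin n)) = n := by simp
  have hfin12 : (n : ℕ) - i - j ≤ finrank ℂ ↥(V1 ⊓ V2) := by
    have := Submodule.finrank_sup_add_finrank_inf_eq V1 V2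
    have h12 : finrank ℂ ↥(V1 ⊔ V2) ≤ n := le_trans (Submodule.finrank_le _) hn.le
    have hi := i.is_lt; have hj := j.is_lt
    omega
  have hfin : 1 ≤ finrank ℂ ↥(V1 ⊓ V2 ⊓ V3) := by
    have := Submodule.finrank_sup_add_finrank_inf_eq (V1 ⊓ V2) V3
    have h12 : finrank ℂ ↥((V1 ⊓ V2) ⊔ V3) ≤ n := le_trans (Submodule.finrank_le _) hn.le
    have hV3' : finrank ℂ ↥V3 = (i : ℕ) + (j : ℕ) + 1 := by simpa using hV3
    have hi := i.is_lt; have hj := j.is_lt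
    omega
  have hne : V1 ⊓ V2 ⊓ V3 ≠ ⊥ := by
    intro h
    rw [h, finrank_bot] at hfin
    omega
  obtain ⟨x, hx, hx0⟩ := Submodule.exists_mem_ne_zero_of_ne_bot hne
  have hx1 : x ∈ V1 := hx.1.1
  have hx2 : x ∈ V2 := hx.1.2
  have hx3 : x ∈ V3 := hx.2
  have hNpos : (0 : ℝ) < RCLike.re (inner ℂ x x : ℂ) := by
    rw [inner_self_eq_norm_sq]
    exact pow_pos (norm_pos_iff.mpr hx0) 2
  have hsplit : RCLike.re (inner ℂ x (Matrix.toEuclideanLin A3 x) : ℂ)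
      = RCLike.re (inner ℂ x (Matrix.toEuclideanLin A1 x) : ℂ)
        + RCLike.re (inner ℂ x (Matrix.toEuclideanLin A2 x) : ℂ) := by
    rw [hsum, map_add, LinearMap.add_apply, inner_add_right, map_add]
  have key := (hr3 x hx3).trans (hsplit ▸ add_le_add (hr1 x hx1) (hr2 x hx2))
  rw [← add_mul] at key
  exact le_of_mul_le_mul_right key hNpos
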